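/- Let λ ∈ ℝ, β ≠ 0, and let K : (0,∞) → ℝ be continuous and locally square-integrable. Let E : (0,∞) → ℝ be continuous and locally square-integrable, satisfying E(t) = K(t) + β ∫₀ᵗ K(t−s) E(s) ds for all t > 0, and define E₁(T) := 1 + β ∫₀ᵀ e^{λs} E(s) ds. If E₁(T) = E₁(T−t) E₁(t) for all 0 < t < T, then the limit e₀ := lim_{t→0⁺} E(t) exists in ℝ, E₁(T) = e^{β e₀ T} for all T ≥ 0, E(t) = e₀ e^{(β e₀ − λ) t} for all t > 0, and K(t) = e₀ e^{−λt} for all t > 0. -/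

import Mathlib

open MeasureTheory Set Filter intervalIntegral

/-- A function that is continuous on `(0,∞)` and locally square-integrable is
locally integrable. -/
private lemma aux_intOn {f : ℝ → ℝ} (hfc : ContinuousOn f (Set.Ioi 0))
    (hL2 : ∀ T > 0, MeasureTheory.IntegrableOn (fun s => (f s) ^ 2) (Set.Ioc 0 T)) :
    ∀ T > 0, MeasureTheory.IntegrableOn f (Set.Ioc 0 T) := by
  intro T hT
  have hmeas : AEStronglyMeasurable f (volume.restrict (Set.Ioc 0 T)) :=
    (hfc.mono Set.Ioc_subset_Ioi_self).aestronglyMeasurable measurableSet_Ioc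
  have hg : MeasureTheory.Integrable (fun s => ((f s) ^ 2 + 1) / 2)
      (volume.restrict (Set.Ioc 0 T)) :=
    ((hL2 T hT).add (integrable_const 1)).div_const 2
  refine hg.mono' hmeas ?_
  filter_upwards with s
  rw [Real.norm_eq_abs]
  nlinarith [sq_nonneg (|f s| - 1), sq_abs (f s)]

/-- Multiplying by an exponential preserves local integrability. -/
private lemma aux_intOn_mul {f : ℝ → ℝ} (hfc : ContinuousOn f (Set.Ioi 0))
    (hL2 : ∀ T > 0, MeasureTheory.IntegrableOn (fun s => (f s) ^ 2) (Set.Ioc 0 T)) (a : ℝ) :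
    ∀ T > 0, MeasureTheory.IntegrableOn (fun s => Real.exp (a * s) * f s) (Set.Ioc 0 T) := by
  intro T hT
  have hint := aux_intOn hfc hL2 T hT
  have hmeas : AEStronglyMeasurable (fun s => Real.exp (a * s) * f s)
      (volume.restrict (Set.Ioc 0 T)) :=
    ((Real.continuous_exp.comp (continuous_const.mul continuous_id)).continuousOn.mul
      (hfc.mono Set.Ioc_subset_Ioi_self)).aestronglyMeasurable measurableSet_Ioc
  have hg : MeasureTheory.Integrable (fun s => Real.exp (|a| * T) * |f s|)
      (volume.restrict (Set.Ioc 0 T)) := hint.abs.const_mul _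
  refine hg.mono' hmeas ?_
  rw [ae_restrict_iff' measurableSet_Ioc]
  filter_upwards with s hs
  rw [Real.norm_eq_abs, abs_mul, Real.abs_exp]
  have h1 : a * s ≤ |a| * T := by
    calc a * s ≤ |a * s| := le_abs_self _
    _ = |a| * |s| := abs_mul _ _
    _ ≤ |a| * T := by
        apply mul_le_mul_of_nonneg_left _ (abs_nonneg a)
        rw [abs_of_pos hs.1]; exact hs.2
  exact mul_le_mul_of_nonneg_right (Real.exp_le_exp.2 h1) (abs_nonneg _)

/-- Continuity of the primitive of a locally integrable function. -/
private lemma aux_primCont {f : ℝ → ℝ}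
    (hint : ∀ T > 0, MeasureTheory.IntegrableOn f (Set.Ioc 0 T)) :
    ContinuousOn (fun t => ∫ s in (0:ℝ)..t, f s) (Set.Ici 0) := by
  intro t₀ ht₀
  have ht₀' : (0:ℝ) ≤ t₀ := ht₀
  have hT : (0:ℝ) < t₀ + 1 := by linarith
  have hicc : MeasureTheory.IntegrableOn f (Set.uIcc 0 (t₀ + 1)) := by
    rw [Set.uIcc_of_le (by linarith), integrableOn_Icc_iff_integrableOn_Ioc]
    exact hint _ hT
  have hcont := intervalIntegral.continuousOn_primitive_interval (a := 0) (b := t₀ + 1) hicc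
  have hmem : Set.uIcc (0:ℝ) (t₀ + 1) ∈ nhdsWithin t₀ (Set.Ici 0) := by
    rw [Set.uIcc_of_le (by linarith)]
    have h1 : Set.Iic (t₀ + 1) ∈ nhdsWithin t₀ (Set.Ici 0) :=
      mem_nhdsWithin_of_mem_nhds (Iic_mem_nhds (by linarith))
    have h2 : Set.Ici (0:ℝ) ∈ nhdsWithin t₀ (Set.Ici 0) := self_mem_nhdsWithin
    have := Filter.inter_mem h2 h1
    rwa [Set.Ici_inter_Iic] at this
  exact (hcont t₀ (by rw [Set.uIcc_of_le (by linarith)]; exact ⟨ht₀', by linarith⟩)).mono_of_mem_nhdsWithin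
    hmem

/-- Fundamental theorem of calculus at points of continuity. -/
private lemma aux_ftc {f : ℝ → ℝ} (hfc : ContinuousOn f (Set.Ioi 0))
    (hint : ∀ T > 0, MeasureTheory.IntegrableOn f (Set.Ioc 0 T)) {t : ℝ} (ht : 0 < t) :
    HasDerivAt (fun u => ∫ s in (0:ℝ)..u, f s) (f t) t := by
  apply intervalIntegral.integral_hasDerivAt_right
  · exact (intervalIntegrable_iff_integrableOn_Ioc_of_le ht.le).2 (hint t ht)
  · exact hfc.stronglyMeasurableAtFilter isOpen_Ioi t ht
  · exact hfc.continuousAt (isOpen_Ioi.mem_nhds ht)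

/-- A function continuous on `[0,∞)` with vanishing derivative on `(0,∞)` is constant. -/
private lemma aux_const {h : ℝ → ℝ} (hc : ContinuousOn h (Set.Ici 0))
    (hd : ∀ t > 0, HasDerivAt h 0 t) : ∀ t ≥ 0, h t = h 0 := by
  intro t ht
  rcases eq_or_lt_of_le ht with h0 | h0
  · rw [← h0]
  have key : ∀ ε, 0 < ε → ε ≤ t → h t = h ε := by
    intro ε hε hεt
    have hsub : Set.Icc ε t ⊆ Set.Ici 0 := fun x hx => le_trans hε.le hx.1
    exact constant_of_has_deriv_right_zero (hc.mono hsub)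
      (fun x hx => (hd x (lt_of_lt_of_le hε hx.1)).hasDerivWithinAt)
      t (Set.right_mem_Icc.2 hεt)
  have h1 : Filter.Tendsto h (nhdsWithin 0 (Set.Ioi 0)) (nhds (h 0)) :=
    (hc 0 Set.self_mem_Ici).mono Set.Ioi_subset_Ici_self
  have h2 : Filter.Tendsto h (nhdsWithin 0 (Set.Ioi 0)) (nhds (h t)) := by
    have hconst : Filter.Tendsto (fun _ : ℝ => h t) (nhdsWithin 0 (Set.Ioi 0)) (nhds (h t)) :=
      tendsto_const_nhds
    refine hconst.congr' ?_
    filter_upwards [self_mem_nhdsWithin,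
      mem_nhdsWithin_of_mem_nhds (Iic_mem_nhds h0)] with ε hε1 hε2
    exact key ε hε1 hε2
  exact tendsto_nhds_unique h2 h1

/-- Case 2 (b₀ = 0, β ≠ 0) of the affine-drift theorem: multiplicativity of
`E₁` forces `E` and `K` to be exponentials. -/
theorem stmt_3 (lam β : ℝ) (hβ : β ≠ 0) (K E : ℝ → ℝ)
    (hKc : ContinuousOn K (Set.Ioi 0))
    (hKL2 : ∀ T > 0, MeasureTheory.IntegrableOn (fun s => (K s) ^ 2) (Set.Ioc 0 T))
    (hEc : ContinuousOn E (Set.Ioi 0))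
    (hEL2 : ∀ T > 0, MeasureTheory.IntegrableOn (fun s => (E s) ^ 2) (Set.Ioc 0 T))
    (hVolt : ∀ t > 0, E t = K t + β * ∫ s in (0:ℝ)..t, K (t - s) * E s)
    (E1 : ℝ → ℝ)
    (hE1 : ∀ T : ℝ, E1 T = 1 + β * ∫ s in (0:ℝ)..T, Real.exp (lam * s) * E s)
    (hMul : ∀ t T : ℝ, 0 < t → t < T → E1 T = E1 (T - t) * E1 t) :
    ∃ e0 : ℝ, Filter.Tendsto E (nhdsWithin 0 (Set.Ioi 0)) (nhds e0) ∧
      (∀ T : ℝ, 0 ≤ T → E1 T = Real.exp (β * e0 * T)) ∧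
      (∀ t > 0, E t = e0 * Real.exp ((β * e0 - lam) * t)) ∧
      (∀ t > 0, K t = e0 * Real.exp (-lam * t)) := by
  -- integrand of E1
  have hfEc : ContinuousOn (fun s => Real.exp (lam * s) * E s) (Set.Ioi 0) :=
    (Real.continuous_exp.comp (continuous_const.mul continuous_id)).continuousOn.mul hEc
  have hfEint := aux_intOn_mul hEc hEL2 lam
  -- basic facts about E1
  have hE1zero : E1 0 = 1 := by simp [hE1 0]
  have hE1cont : ContinuousOn E1 (Set.Ici 0) := by
    have : ContinuousOn (fun T => 1 + β * ∫ s in (0:ℝ)..T, Real.exp (lam * s) * E s)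
        (Set.Ici 0) := continuousOn_const.add (continuousOn_const.mul (aux_primCont hfEint))
    exact this.congr (fun T _ => hE1 T)
  set D : ℝ → ℝ := fun t => β * (Real.exp (lam * t) * E t) with hD
  have hE1deriv : ∀ t > 0, HasDerivAt E1 (D t) t := by
    intro t ht
    have h1 : HasDerivAt (fun T => 1 + β * ∫ s in (0:ℝ)..T, Real.exp (lam * s) * E s)
        (D t) t := ((aux_ftc hfEc hfEint ht).const_mul β).const_add 1
    exact h1.congr_of_eventuallyEq (by filter_upwards with T; exact hE1 T)
  -- E1 is a square on (0,∞)
  have hE1sq : ∀ t > 0, E1 t = (E1 (t / 2)) ^ 2 := by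
    intro t ht
    have := hMul (t / 2) t (by linarith) (by linarith)
    rw [this, show t - t / 2 = t / 2 by ring]; ring
  -- positivity of E1
  have hE1pos : ∀ t ≥ 0, 0 < E1 t := by
    intro t ht
    by_contra hle
    push_neg at hle
    have ht0 : 0 < t := by
      rcases eq_or_lt_of_le ht with h | h
      · exfalso; rw [← h, hE1zero] at hle; linarith
      · exact h
    have hE1t : E1 t = 0 := le_antisymm hle (by rw [hE1sq t ht0]; positivity)
    set A := Set.Icc 0 t ∩ E1 ⁻¹' {0} with hA
    have hAne : A.Nonempty := ⟨t, ⟨⟨ht, le_refl t⟩, hE1t⟩⟩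
    have hAclosed : IsClosed A :=
      (hE1cont.mono Set.Icc_subset_Ici_self).preimage_isClosed_of_isClosed isClosed_Icc
        isClosed_singleton
    have hAcomp : IsCompact A :=
      isCompact_Icc.of_isClosed_subset hAclosed Set.inter_subset_left
    have hm := hAcomp.sInf_mem hAne
    set m := sInf A with hmdef
    obtain ⟨⟨hm0, hmt⟩, hE1m⟩ := hm
    have hmpos : 0 < m := by
      rcases eq_or_lt_of_le hm0 with h | h
      · exfalso
        have : E1 m = 0 := hE1m
        rw [← h, hE1zero] at this; linarith
      · exact h
    have hhalf : E1 (m / 2) = 0 := by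
      have h := hE1sq m hmpos
      have h2 : (E1 (m / 2)) ^ 2 = 0 := by rw [← h]; exact hE1m
      exact pow_eq_zero_iff two_ne_zero |>.1 h2
    have hmem : m / 2 ∈ A := ⟨⟨by linarith, by linarith⟩, hhalf⟩
    have := csInf_le hAcomp.bddBelow hmem
    rw [← hmdef] at this
    linarith
  -- the derivative relation
  have hDrel : ∀ t > 0, ∀ s > 0, D (t + s) = D t * E1 s := by
    intro t ht s hs
    have heq : (fun u => E1 u * E1 s) =ᶠ[nhds t] fun u => E1 (u + s) := by
      filter_upwards [isOpen_Ioi.mem_nhds ht] with u (hu : (0:ℝ) < u)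
      have := hMul u (u + s) hu (by linarith)
      rw [this, show u + s - u = s by ring]
      ring
    have h1 : HasDerivAt (fun u => E1 (u + s)) (D (t + s)) t := by
      have := (hE1deriv (t + s) (by linarith)).comp t ((hasDerivAt_id t).add_const s)
      simp at this; exact this
    have h2 : HasDerivAt (fun u => E1 u * E1 s) (D t * E1 s) t :=
      (hE1deriv t ht).mul_const (E1 s)
    exact (h1.congr_of_eventuallyEq heq).unique h2
  set c : ℝ := D 1 / E1 1 with hc
  have hE1one : E1 1 ≠ 0 := (hE1pos 1 zero_le_one).ne'
  have hDc : ∀ t > 0, D t = c * E1 t := by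
    intro t ht
    have h1 := hDrel t ht 1 one_pos
    have h2 := hDrel 1 one_pos t ht
    rw [show (1:ℝ) + t = t + 1 by ring] at h2
    rw [hc]
    field_simp
    nlinarith [h1, h2]
  -- E1 is an exponential
  have hE1exp : ∀ t ≥ 0, E1 t = Real.exp (c * t) := by
    have hcont : ContinuousOn (fun t => Real.exp (-(c * t)) * E1 t) (Set.Ici 0) :=
      (Real.continuous_exp.comp (continuous_const.mul continuous_id).neg).continuousOn.mul
        hE1cont
    have hder : ∀ t > 0, HasDerivAt (fun t => Real.exp (-(c * t)) * E1 t) 0 t := by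
      intro t ht
      have he : HasDerivAt (fun u => Real.exp (-(c * u))) (Real.exp (-(c * t)) * (-c)) t := by
        have := (((hasDerivAt_id t).const_mul c).neg).exp
        simpa using this
      have := he.mul (hE1deriv t ht)
      exact this.congr_deriv (by rw [hDc t ht]; ring)
    intro t ht
    have h := aux_const hcont hder t ht
    simp only [mul_zero, neg_zero, Real.exp_zero, one_mul, hE1zero, mul_one] at h
    have h2 : Real.exp (c * t) * (Real.exp (-(c * t)) * E1 t) = Real.exp (c * t) * 1 := by
      rw [h]
    rw [← mul_assoc, ← Real.exp_add, add_neg_cancel, Real.exp_zero, one_mul, mul_one] at h2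
    exact h2
  have hce : c = β * (c / β) := by field_simp
  have hEform : ∀ t > 0, E t = c / β * Real.exp ((c - lam) * t) := by
    intro t ht
    have h1 := hDc t ht
    rw [hE1exp t ht.le] at h1
    have hexp : Real.exp (lam * t) ≠ 0 := Real.exp_ne_zero _
    have h2 : Real.exp (lam * t) * Real.exp ((c - lam) * t) = Real.exp (c * t) := by
      rw [← Real.exp_add]; ring_nf
    simp only [hD] at h1
    have h3 : β * (Real.exp (lam * t) * E t)
        = β * (Real.exp (lam * t) * (c / β * Real.exp ((c - lam) * t))) := by
      rw [h1, ← h2]; field_simp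
    exact mul_left_cancel₀ hexp (mul_left_cancel₀ hβ h3)
  refine ⟨c / β, ?_, ?_, ?_, ?_⟩
  · -- limit of E at 0⁺
    have hlim : Filter.Tendsto (fun t => c / β * Real.exp ((c - lam) * t)) (nhds 0)
        (nhds (c / β)) := by
      have hcont : Continuous fun t : ℝ => c / β * Real.exp ((c - lam) * t) :=
        continuous_const.mul (Real.continuous_exp.comp (continuous_const.mul continuous_id))
      simpa using hcont.tendsto 0
    refine (hlim.mono_left nhdsWithin_le_nhds).congr' ?_
    filter_upwards [self_mem_nhdsWithin] with t ht
    exact (hEform t ht).symm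
  · -- E1 is an exponential
    intro T hT
    rw [hE1exp T hT, show β * (c / β) = c by field_simp]
  · -- formula for E
    intro t ht
    rw [hEform t ht, show β * (c / β) = c by field_simp]
  · -- formula for K
    have hfKc : ContinuousOn (fun s => Real.exp (-(c - lam) * s) * K s) (Set.Ioi 0) :=
      (Real.continuous_exp.comp (continuous_const.mul continuous_id)).continuousOn.mul hKc
    have hfKint := aux_intOn_mul hKc hKL2 (-(c - lam))
    set Ψ : ℝ → ℝ := fun t => ∫ s in (0:ℝ)..t, Real.exp (-(c - lam) * s) * K s with hΨdef
    have hΨcont : ContinuousOn Ψ (Set.Ici 0) := aux_primCont hfKint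
    have hΨderiv : ∀ t > 0, HasDerivAt Ψ (Real.exp (-(c - lam) * t) * K t) t :=
      fun t ht => aux_ftc hfKc hfKint ht
    have hΨ0 : Ψ 0 = 0 := intervalIntegral.integral_same
    have hKg : ∀ t > 0, K t = Real.exp ((c - lam) * t) * (c / β - c * Ψ t) := by
      intro t ht
      have hne : ∀ᵐ (s : ℝ), s ≠ t := by
        rw [ae_iff]
        simp only [not_not, Set.setOf_eq_eq_singleton]
        exact measure_singleton t
      have hconv : (∫ s in (0:ℝ)..t, K (t - s) * E s)
          = ∫ s in (0:ℝ)..t, K s * E (t - s) := by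
        have := intervalIntegral.integral_comp_sub_left (a := 0) (b := t)
          (fun u => K u * E (t - u)) t
        simp only [sub_sub_cancel, sub_zero, sub_self] at this
        exact this
      have hI : (∫ s in (0:ℝ)..t, K s * E (t - s))
          = ∫ s in (0:ℝ)..t, (c / β * Real.exp ((c - lam) * t))
              * (Real.exp (-(c - lam) * s) * K s) := by
        apply intervalIntegral.integral_congr_ae
        filter_upwards [hne] with s hs hmem
        rw [Set.uIoc_of_le ht.le] at hmem
        have hst : 0 < t - s := by
          rcases lt_or_eq_of_le hmem.2 with h | h
          · linarith
          · exact absurd h hs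
        rw [hEform (t - s) hst,
          show (c - lam) * (t - s) = (c - lam) * t + -(c - lam) * s by ring, Real.exp_add]
        ring
      have h1 := hVolt t ht
      rw [hconv, hI, intervalIntegral.integral_const_mul, hEform t ht] at h1
      have h1' : c / β * Real.exp ((c - lam) * t)
          = K t + β * (c / β * Real.exp ((c - lam) * t) * Ψ t) := h1
      linear_combination -h1' + Real.exp ((c - lam) * t) * Ψ t * hce
    have hcont2 : ContinuousOn (fun t => Real.exp (c * t) * (c / β - c * Ψ t))
        (Set.Ici 0) :=
      (Real.continuous_exp.comp (continuous_const.mul continuous_id)).continuousOn.mul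
        (continuousOn_const.sub (continuousOn_const.mul hΨcont))
    have hder2 : ∀ t > 0, HasDerivAt (fun t => Real.exp (c * t) * (c / β - c * Ψ t)) 0 t := by
      intro t ht
      have he : HasDerivAt (fun u => Real.exp (c * u)) (Real.exp (c * t) * c) t := by
        have := ((hasDerivAt_id t).const_mul c).exp
        simpa using this
      have hg' : HasDerivAt (fun u => c / β - c * Ψ u)
          (-(c * (Real.exp (-(c - lam) * t) * K t))) t := by
        have := ((hΨderiv t ht).const_mul c).const_sub (c / β)
        simpa using this
      have hmul := he.mul hg'
      refine hmul.congr_deriv ?_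
      rw [hKg t ht,
        show Real.exp (-(c - lam) * t) * (Real.exp ((c - lam) * t) * (c / β - c * Ψ t))
          = (Real.exp (-(c - lam) * t) * Real.exp ((c - lam) * t)) * (c / β - c * Ψ t) by ring,
        ← Real.exp_add, neg_mul, neg_add_cancel, Real.exp_zero, one_mul]
      ring
    have hconst := aux_const hcont2 hder2
    intro t ht
    have h := hconst t ht.le
    simp only [mul_zero, Real.exp_zero, one_mul, hΨ0, sub_zero] at h
    have h2 : Real.exp (-(c * t)) * (Real.exp (c * t) * (c / β - c * Ψ t))
        = Real.exp (-(c * t)) * (c / β) := by rw [h]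
    rw [← mul_assoc, ← Real.exp_add, neg_add_cancel, Real.exp_zero, one_mul] at h2
    rw [hKg t ht, h2,
      show Real.exp ((c - lam) * t) * (Real.exp (-(c * t)) * (c / β))
        = c / β * (Real.exp ((c - lam) * t) * Real.exp (-(c * t))) by ring,
      ← Real.exp_add, show (c - lam) * t + -(c * t) = -lam * t by ring]
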